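/- Let d ≥ 1 and let P be a polynomial. Then the class of graphs of polynomial growth P is hyperfinite: for every ε > 0 there exists a constant K_ε > 0 such that every finite graph G of maximum degree at most d satisfying |B_r(G,v)| ≤ P(r) for every vertex v ∈ V(G) and every r ≥ 1 admits a subset Y ⊆ V(G) with |Y| ≤ ε·|V(G)| such that after deleting Y and all edges incident to Y, every connected component of the remaining graph has at most K_ε vertices. -/

import Mathlib

universe u

/-- The graph obtained from `G` by deleting the vertex set `Y` together with
all edges incident to a vertex of `Y` (the deleted vertices are kept as
isolated vertices, which does not affect component sizes of the rest). -/
def removeVerts {V : Type*} (G : SimpleGraph V) (Y : Set V) : SimpleGraph V where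
  Adj u v := G.Adj u v ∧ u ∉ Y ∧ v ∉ Y
  symm := by
    constructor
    intro u v h
    exact ⟨h.1.symm, h.2.2, h.2.1⟩
  loopless := by
    constructor
    intro v h
    exact G.loopless.irrefl v h.1

/-- The ball of radius `r` around `v` in `G`: all vertices at graph distance
at most `r` from `v`. -/
def graphBall {V : Type*} (G : SimpleGraph V) (v : V) (r : ℕ) : Set V :=
  {w : V | G.edist v w ≤ (r : ℕ∞)}


open SimpleGraph Filter Asymptotics

lemma exists_slack {m R : ℕ} (hm : 2 ≤ m) (hR : 1 ≤ R) (a : ℕ → ℕ)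
    (ha1 : 1 ≤ a 1)
    (haR : (a R : ℝ) < ((m : ℝ) / ((m : ℝ) - 1)) ^ (R - 1)) :
    ∃ r, 1 ≤ r ∧ r < R ∧ m * a (r + 1) ≤ a (r + 1) + m * a r := by
  by_contra hcon
  push_neg at hcon
  have hm1 : (0 : ℝ) < (m : ℝ) - 1 := by
    have : (2 : ℝ) ≤ (m : ℝ) := by exact_mod_cast hm
    linarith
  have key : ∀ j, 1 ≤ j → j ≤ R → ((m : ℝ) / ((m : ℝ) - 1)) ^ (j - 1) ≤ (a j : ℝ) := by
    intro j
    induction j with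
    | zero => omega
    | succ n ih =>
      intro _ hnR
      rcases Nat.eq_zero_or_pos n with h1 | h1
      · subst h1
        simp only [Nat.add_sub_cancel, pow_zero]
        exact_mod_cast ha1
      · have hn1 : 1 ≤ n := h1
        have hnR' : n ≤ R := by omega
        have hih := ih hn1 hnR'
        have hstep := hcon n hn1 (by omega)
        -- a (n+1) + m * a n < m * a (n+1)
        have hstepR : ((a (n+1) : ℝ)) + (m : ℝ) * (a n : ℝ) < (m : ℝ) * (a (n+1) : ℝ) := by
          exact_mod_cast hstep
        have hq : ((m : ℝ) / ((m : ℝ) - 1)) * (a n : ℝ) ≤ (a (n+1) : ℝ) := by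
          rw [div_mul_eq_mul_div, div_le_iff₀ hm1]
          nlinarith
        have : ((m : ℝ) / ((m : ℝ) - 1)) ^ n ≤ (a (n+1) : ℝ) := by
          have hqpos : (0 : ℝ) < (m : ℝ) / ((m : ℝ) - 1) := by positivity
          calc ((m : ℝ) / ((m : ℝ) - 1)) ^ n
              = ((m : ℝ) / ((m : ℝ) - 1)) ^ (n - 1) * ((m : ℝ) / ((m : ℝ) - 1)) := by
                rw [← pow_succ]; congr 1; omega
            _ ≤ (a n : ℝ) * ((m : ℝ) / ((m : ℝ) - 1)) := by
                apply mul_le_mul_of_nonneg_right hih hqpos.le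
            _ = ((m : ℝ) / ((m : ℝ) - 1)) * (a n : ℝ) := by ring
            _ ≤ _ := hq
        simpa using this
  exact absurd (key R hR le_rfl) (not_le.mpr haR)

lemma exists_R_poly_lt (P : Polynomial ℕ) {q : ℝ} (hq : 1 < q) :
    ∃ R : ℕ, 1 ≤ R ∧ ((P.eval R : ℕ) : ℝ) < q ^ (R - 1) := by
  set D := P.natDegree
  set C : ℕ := ∑ i ∈ Finset.range (D + 1), P.coeff i with hC
  have hPev : ∀ n : ℕ, 1 ≤ n → P.eval n ≤ C * n ^ D := by
    intro n hn
    rw [Polynomial.eval_eq_sum_range, hC, Finset.sum_mul]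
    apply Finset.sum_le_sum
    intro i hi
    exact Nat.mul_le_mul_left _ (Nat.pow_le_pow_right hn (by
      simp only [Finset.mem_range] at hi; omega))
  have hlo := isLittleO_pow_const_const_pow_of_one_lt (R := ℝ) D hq
  have hc : (0 : ℝ) < q⁻¹ / ((C : ℝ) + 1) := by positivity
  have hev := (hlo.def hc).and (eventually_ge_atTop 1)
  obtain ⟨n, hn1, hn2⟩ := hev.exists
  have hq0 : (0 : ℝ) < q := lt_trans one_pos hq
  refine ⟨n, hn2, ?_⟩
  have hnorm : ((n : ℝ)) ^ D ≤ q⁻¹ / ((C : ℝ) + 1) * q ^ n := by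
    have := hn1
    rwa [Real.norm_eq_abs, Real.norm_eq_abs, abs_of_nonneg (by positivity),
      abs_of_nonneg (by positivity)] at this
  have hqn : q⁻¹ * q ^ n = q ^ (n - 1) := by
    have : q ^ n = q ^ (n - 1) * q := by rw [← pow_succ]; congr 1; omega
    rw [this]
    field_simp
  have h1 : ((P.eval n : ℕ) : ℝ) ≤ (C : ℝ) * ((n : ℝ)) ^ D := by
    have := hPev n hn2
    exact_mod_cast le_trans (Nat.cast_le.mpr this) (by push_cast; ring_nf; exact le_refl _)
  calc ((P.eval n : ℕ) : ℝ) ≤ (C : ℝ) * ((n : ℝ)) ^ D := h1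
    _ ≤ (C : ℝ) * (q⁻¹ / ((C : ℝ) + 1) * q ^ n) := by
        apply mul_le_mul_of_nonneg_left hnorm (by positivity)
    _ = (C : ℝ) / ((C : ℝ) + 1) * (q⁻¹ * q ^ n) := by ring
    _ = (C : ℝ) / ((C : ℝ) + 1) * q ^ (n - 1) := by rw [hqn]
    _ < 1 * q ^ (n - 1) := by
        apply mul_lt_mul_of_pos_right _ (by positivity)
        rw [div_lt_one (by positivity)]
        linarith
    _ = q ^ (n - 1) := one_mul _

lemma walk_end_mem {V : Type u} {G : SimpleGraph V} {T : Set V}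
    (hT : ∀ u ∈ T, ∀ u', G.Adj u u' → u' ∈ T) {a b : V} (p : G.Walk a b) (ha : a ∈ T) :
    b ∈ T := by
  induction p with
  | nil => exact ha
  | cons h p ih => exact ih (hT _ ha _ h)

lemma supp_subset_of_closed {V : Type u} {G : SimpleGraph V} {T : Set V} {w : V} (hw : w ∈ T)
    (hT : ∀ u ∈ T, ∀ u', G.Adj u u' → u' ∈ T) :
    ((G.connectedComponentMk w).supp) ⊆ T := by
  intro u hu
  rw [ConnectedComponent.mem_supp_iff, ConnectedComponent.eq] at hu
  obtain ⟨p⟩ := hu.symm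
  exact walk_end_mem hT p hw

lemma graphBall_mono {V : Type u} {G : SimpleGraph V} (v : V) {r s : ℕ} (h : r ≤ s) :
    graphBall G v r ⊆ graphBall G v s := by
  intro w hw
  exact le_trans (a := G.edist v w) hw (by exact_mod_cast h)

lemma edist_anti {V : Type u} {G H : SimpleGraph V} (hle : H ≤ G) (u v : V) :
    G.edist u v ≤ H.edist u v := by
  rcases eq_or_ne (H.edist u v) ⊤ with h | h
  · simp [h]
  · obtain ⟨p, hp⟩ := SimpleGraph.exists_walk_of_edist_ne_top h
    calc G.edist u v ≤ (p.mapLe hle).length := SimpleGraph.edist_le _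
    _ = H.edist u v := by simp [hp]

lemma graphBall_anti {V : Type u} {G H : SimpleGraph V} (hle : H ≤ G) (v : V) (r : ℕ) :
    graphBall H v r ⊆ graphBall G v r := fun w hw => le_trans (edist_anti hle v w) hw

lemma mem_graphBall_self {V : Type u} (G : SimpleGraph V) (v : V) (r : ℕ) :
    v ∈ graphBall G v r := by
  show G.edist v v ≤ _
  simp


/-- ball of H around a vertex of S stays in S -/
lemma ball_subset {V : Type u} {G : SimpleGraph V} {S : Finset V} {v : V} (hv : v ∈ S) (j : ℕ) :
    graphBall (removeVerts G ((↑S : Set V)ᶜ)) v j ⊆ ↑S := by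
  set H := removeVerts G ((↑S : Set V)ᶜ)
  intro w hw
  have hreach : H.Reachable v w :=
    SimpleGraph.reachable_of_edist_ne_top (ne_top_of_le_ne_top (ENat.coe_ne_top j) hw)
  obtain ⟨p⟩ := hreach
  refine walk_end_mem (T := ↑S) ?_ p hv
  intro u _ u' hadj
  have := hadj.2.2
  simpa using this

lemma main_lemma {V : Type u} [Fintype V] [DecidableEq V] (G : SimpleGraph V)
    (P : Polynomial ℕ) (m R K : ℕ) (hm : 2 ≤ m) (hR : 1 ≤ R) (hK1 : 1 ≤ K)
    (hKP : P.eval R ≤ K)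
    (hgrow : ∀ (v : V) (r : ℕ), 1 ≤ r → (graphBall G v r).ncard ≤ P.eval r)
    (hRP : ((P.eval R : ℕ) : ℝ) < ((m : ℝ) / ((m : ℝ) - 1)) ^ (R - 1)) :
    ∀ S : Finset V, ∃ Y : Finset V, Y ⊆ S ∧ m * Y.card ≤ S.card ∧
      ∀ w : V, (((removeVerts G ((↑S : Set V)ᶜ ∪ ↑Y)).connectedComponentMk w).supp).ncard ≤ K := by
  intro S
  induction S using Finset.strongInduction with
  | _ S IH =>
  rcases S.eq_empty_or_nonempty with rfl | ⟨v, hv⟩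
  · refine ⟨∅, Finset.Subset.refl _, by simp, ?_⟩
    intro w
    have hsub : (((removeVerts G ((↑(∅ : Finset V) : Set V)ᶜ ∪ ↑(∅ : Finset V))).connectedComponentMk w).supp) ⊆ {w} := by
      refine supp_subset_of_closed rfl ?_
      intro u hu u' hadj
      exact absurd (by simp : u ∈ (↑(∅ : Finset V) : Set V)ᶜ ∪ ↑(∅ : Finset V)) hadj.2.1
    calc _ ≤ ({w} : Set V).ncard := Set.ncard_le_ncard hsub (Set.toFinite _)
    _ = 1 := Set.ncard_singleton w
    _ ≤ K := hK1
  · set H := removeVerts G ((↑S : Set V)ᶜ) with hH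
    have hHle : H ≤ G := fun u u' h => h.1
    set a : ℕ → ℕ := fun j => (graphBall H v j).ncard with ha
    have hamono : ∀ {i j : ℕ}, i ≤ j → a i ≤ a j := fun hij =>
      Set.ncard_le_ncard (graphBall_mono v hij) (Set.toFinite _)
    have haP : ∀ j, 1 ≤ j → a j ≤ P.eval j := fun j hj =>
      le_trans (Set.ncard_le_ncard (graphBall_anti hHle v j) (Set.toFinite _)) (hgrow v j hj)
    have ha1 : 1 ≤ a 1 :=
      Set.ncard_pos (Set.toFinite _) |>.mpr ⟨v, mem_graphBall_self H v 1⟩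
    obtain ⟨r, hr1, hrR, hslack⟩ := exists_slack hm hR a ha1
      (lt_of_le_of_lt (by exact_mod_cast haP R hR) hRP)
    set B : Set V := graphBall H v r with hB
    set B' : Set V := graphBall H v (r + 1) with hB'
    have hBB' : B ⊆ B' := graphBall_mono v (Nat.le_succ r)
    have hB'S : B' ⊆ ↑S := ball_subset hv (r + 1)
    set Y₀ : Finset V := (Set.toFinite (B' \ B)).toFinset with hY₀
    set Bf : Finset V := (Set.toFinite B').toFinset with hBf
    have hBfS : Bf ⊆ S := by
      intro x hx
      rw [hBf, Set.Finite.mem_toFinset] at hx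
      exact_mod_cast hB'S hx
    set S' : Finset V := S \ Bf with hS'
    have hS'ss : S' ⊂ S := by
      rw [hS']
      refine Finset.sdiff_ssubset ?_ ?_
      · exact hBfS
      · exact ⟨v, by rw [hBf, Set.Finite.mem_toFinset]; exact mem_graphBall_self H v (r+1)⟩
    obtain ⟨Y', hY'sub, hY'card, hY'comp⟩ := IH S' hS'ss
    refine ⟨Y₀ ∪ Y', ?_, ?_, ?_⟩
    · -- subset
      apply Finset.union_subset
      · intro x hx
        rw [hY₀, Set.Finite.mem_toFinset] at hx
        exact_mod_cast hB'S hx.1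
      · exact hY'sub.trans (Finset.sdiff_subset)
    · -- cardinality
      have hY₀card : Y₀.card = a (r+1) - a r := by
        rw [hY₀, ← Set.ncard_eq_toFinset_card _ (Set.toFinite _),
          Set.ncard_diff hBB' (Set.toFinite _)]
      have hcard1 : m * Y₀.card ≤ a (r+1) := by
        rw [hY₀card, Nat.mul_sub]
        omega
      have hScard : S.card = S'.card + a (r+1) := by
        have hBfcard : Bf.card = a (r+1) := by
          rw [hBf, ← Set.ncard_eq_toFinset_card _ (Set.toFinite _)]
        rw [hS', Finset.card_sdiff_of_subset hBfS, hBfcard]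
        have := Finset.card_le_card hBfS
        omega
      calc m * (Y₀ ∪ Y').card ≤ m * (Y₀.card + Y'.card) :=
            Nat.mul_le_mul_left m (Finset.card_union_le _ _)
        _ = m * Y₀.card + m * Y'.card := Nat.mul_add m _ _
        _ ≤ a (r+1) + S'.card := Nat.add_le_add hcard1 hY'card
        _ = S.card := by omega
    · -- components
      intro w
      set Y : Finset V := Y₀ ∪ Y' with hYdef
      set D : Set V := (↑S : Set V)ᶜ ∪ ↑Y with hD
      set Gf : SimpleGraph V := removeVerts G D with hGf
      have hadjS : ∀ u u', Gf.Adj u u' →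
          u ∈ S ∧ u ∉ Y₀ ∧ u ∉ Y' ∧ u' ∈ S ∧ u' ∉ Y₀ ∧ u' ∉ Y' ∧ H.Adj u u' := by
        intro u u' hadj
        obtain ⟨hG, hu, hu'⟩ := hadj
        rw [hD, Set.mem_union, not_or, Set.mem_compl_iff, not_not] at hu hu'
        obtain ⟨huS, huY⟩ := hu
        obtain ⟨hu'S, hu'Y⟩ := hu'
        rw [hYdef] at huY hu'Y
        simp only [Finset.coe_union, Set.mem_union, not_or, Finset.mem_coe] at huY hu'Y
        refine ⟨huS, huY.1, huY.2, hu'S, hu'Y.1, hu'Y.2, hG, ?_, ?_⟩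
        · simpa using huS
        · simpa using hu'S
      by_cases hw : w ∈ D
      · have hsub : ((Gf.connectedComponentMk w).supp) ⊆ {w} := by
          refine supp_subset_of_closed rfl ?_
          intro u hu u' hadj
          rcases hu with rfl
          exact absurd hw hadj.2.1
        calc _ ≤ ({w} : Set V).ncard := Set.ncard_le_ncard hsub (Set.toFinite _)
          _ = 1 := Set.ncard_singleton w
          _ ≤ K := hK1
      · rw [hD, Set.mem_union, not_or, Set.mem_compl_iff, not_not] at hw
        obtain ⟨hwS, hwY⟩ := hw
        rw [hYdef] at hwY
        simp only [Finset.coe_union, Set.mem_union, not_or, Finset.mem_coe] at hwY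
        obtain ⟨hwY₀, hwY'⟩ := hwY
        have hedist1 : ∀ {x y : V}, H.Adj x y → H.edist x y ≤ 1 := fun h =>
          (SimpleGraph.edist_eq_one_iff_adj.mpr h).le
        by_cases hwB : w ∈ B
        · -- component stays in the ball B
          have hclosed : ∀ u ∈ B, ∀ u', Gf.Adj u u' → u' ∈ B := by
            intro u hu u' hadj
            obtain ⟨huS, -, -, hu'S, hu'Y₀, -, hHadj⟩ := hadjS u u' hadj
            have h1 : H.edist v u' ≤ ((r + 1 : ℕ) : ℕ∞) := by
              calc H.edist v u' ≤ H.edist v u + H.edist u u' := SimpleGraph.edist_triangle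
                _ ≤ (r : ℕ∞) + 1 := add_le_add hu (hedist1 hHadj)
                _ = ((r + 1 : ℕ) : ℕ∞) := by push_cast; rfl
            by_contra hu'B
            exact hu'Y₀ (by rw [hY₀, Set.Finite.mem_toFinset]; exact ⟨h1, hu'B⟩)
          calc ((Gf.connectedComponentMk w).supp).ncard
              ≤ B.ncard := Set.ncard_le_ncard (supp_subset_of_closed hwB hclosed) (Set.toFinite _)
            _ ≤ (graphBall H v R).ncard :=
                Set.ncard_le_ncard (graphBall_mono v hrR.le) (Set.toFinite _)
            _ ≤ (graphBall G v R).ncard :=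
                Set.ncard_le_ncard (graphBall_anti hHle v R) (Set.toFinite _)
            _ ≤ P.eval R := hgrow v R hR
            _ ≤ K := hKP
        · by_cases hwB' : w ∈ B'
          · exact absurd (by rw [hY₀, Set.Finite.mem_toFinset]; exact ⟨hwB', hwB⟩) hwY₀
          · -- w outside the bigger ball: use the inductive component
            have hwS' : w ∈ S' := by
              rw [hS', Finset.mem_sdiff]
              exact ⟨hwS, fun h => hwB' (by rwa [hBf, Set.Finite.mem_toFinset] at h)⟩
            set G' : SimpleGraph V := removeVerts G ((↑S' : Set V)ᶜ ∪ ↑Y') with hG'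
            set T : Set V := ((G'.connectedComponentMk w).supp) with hT
            have hwT : w ∈ T := ConnectedComponent.mem_supp_iff _ _ |>.mpr rfl
            have hclosed : ∀ u ∈ T, ∀ u', Gf.Adj u u' → u' ∈ T := by
              intro u hu u' hadj
              obtain ⟨huS, huY₀, huY', hu'S, hu'Y₀, hu'Y', hHadj⟩ := hadjS u u' hadj
              have huMem : u ∉ ((↑S' : Set V)ᶜ ∪ ↑Y') := by
                rw [ConnectedComponent.mem_supp_iff, ConnectedComponent.eq] at hu
                obtain ⟨p⟩ := hu
                cases p with
                | nil =>
                  simp only [Set.mem_union, not_or, Set.mem_compl_iff, not_not]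
                  exact ⟨by exact_mod_cast hwS', by exact_mod_cast hwY'⟩
                | cons h q => exact h.2.1
              have huS' : u ∈ S' := by
                have := huMem
                simp only [Set.mem_union, not_or, Set.mem_compl_iff, not_not] at this
                exact_mod_cast this.1
              have huB' : u ∉ B' := by
                intro hmem
                rw [hS', Finset.mem_sdiff] at huS'
                exact huS'.2 (by rw [hBf, Set.Finite.mem_toFinset]; exact hmem)
              have hu'B : u' ∉ B := by
                intro hmem
                apply huB'
                show H.edist v u ≤ ((r + 1 : ℕ) : ℕ∞)
                calc H.edist v u ≤ H.edist v u' + H.edist u' u := SimpleGraph.edist_triangle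
                  _ ≤ (r : ℕ∞) + 1 := add_le_add hmem (hedist1 hHadj.symm)
                  _ = ((r + 1 : ℕ) : ℕ∞) := by push_cast; rfl
              have hu'B' : u' ∉ B' := by
                intro hmem
                exact hu'Y₀ (by rw [hY₀, Set.Finite.mem_toFinset]; exact ⟨hmem, hu'B⟩)
              have hu'S' : u' ∈ S' := by
                rw [hS', Finset.mem_sdiff]
                exact ⟨hu'S, fun h => hu'B' (by rwa [hBf, Set.Finite.mem_toFinset] at h)⟩
              have hu'Mem : u' ∉ ((↑S' : Set V)ᶜ ∪ ↑Y') := by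
                simp only [Set.mem_union, not_or, Set.mem_compl_iff, not_not]
                exact ⟨by exact_mod_cast hu'S', by exact_mod_cast hu'Y'⟩
              have hadj' : G'.Adj u u' := ⟨hadj.1, huMem, hu'Mem⟩
              rw [hT, ConnectedComponent.mem_supp_iff, ConnectedComponent.eq]
              rw [ConnectedComponent.mem_supp_iff, ConnectedComponent.eq] at hu
              exact hadj'.symm.reachable.trans hu
            calc ((Gf.connectedComponentMk w).supp).ncard
                ≤ T.ncard := Set.ncard_le_ncard (supp_subset_of_closed hwT hclosed) (Set.toFinite _)
              _ ≤ K := hY'comp w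

/-- For `d ≥ 1` and a polynomial `P`, the class of finite
graphs of maximum degree at most `d` and of polynomial growth `P` (meaning
`|B_r(G,v)| ≤ P(r)` for every vertex `v` and every `r ≥ 1`) is hyperfinite:
for every `ε > 0` there is `K_ε > 0` such that every such graph `G` admits a
set `Y` of at most `ε |V(G)|` vertices whose deletion (with all incident
edges) leaves connected components of size at most `K_ε`. -/
theorem polynomial_growth_hyperfinite (d : ℕ) (hd : 1 ≤ d) (P : Polynomial ℕ)
    (ε : ℝ) (hε : 0 < ε) :
    ∃ K : ℕ, 0 < K ∧
      ∀ (V : Type u) [Fintype V] (G : SimpleGraph V),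
        (∀ v : V, (G.neighborSet v).ncard ≤ d) →
        (∀ (v : V) (r : ℕ), 1 ≤ r → (graphBall G v r).ncard ≤ P.eval r) →
        ∃ Y : Finset V,
          (Y.card : ℝ) ≤ ε * Fintype.card V ∧
          ∀ v : V,
            (((removeVerts G ↑Y).connectedComponentMk v).supp).ncard ≤ K := by
  classical
  set m : ℕ := max 2 ⌈ε⁻¹⌉₊ with hmdef
  have hm : 2 ≤ m := le_max_left _ _
  have h2m : (2 : ℝ) ≤ (m : ℝ) := by exact_mod_cast hm
  have hq : 1 < (m : ℝ) / ((m : ℝ) - 1) := by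
    rw [lt_div_iff₀ (by linarith)]
    linarith
  obtain ⟨R, hR, hRP⟩ := exists_R_poly_lt P hq
  refine ⟨max (P.eval R) 1, lt_of_lt_of_le one_pos (le_max_right _ _), ?_⟩
  intro V _ G hdeg hgrow
  haveI := Classical.decEq V
  obtain ⟨Y, hYsub, hYcard, hYcomp⟩ :=
    main_lemma G P m R (max (P.eval R) 1) hm hR (le_max_right _ _) (le_max_left _ _)
      hgrow hRP Finset.univ
  refine ⟨Y, ?_, ?_⟩
  · have hmp : (0 : ℝ) < (m : ℝ) := by linarith
    have h1 : (m : ℝ) * (Y.card : ℝ) ≤ (Fintype.card V : ℝ) := by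
      have h2 : m * Y.card ≤ Fintype.card V := by
        simpa [Finset.card_univ] using hYcard
      exact_mod_cast h2
    have hinv : (m : ℝ)⁻¹ ≤ ε := by
      have hceil : ε⁻¹ ≤ (m : ℝ) := by
        calc ε⁻¹ ≤ (⌈ε⁻¹⌉₊ : ℝ) := Nat.le_ceil _
          _ ≤ (m : ℝ) := by exact_mod_cast le_max_right 2 ⌈ε⁻¹⌉₊
      calc (m : ℝ)⁻¹ ≤ (ε⁻¹)⁻¹ := inv_anti₀ (inv_pos.mpr hε) hceil
        _ = ε := inv_inv ε
    calc (Y.card : ℝ) = (m : ℝ)⁻¹ * ((m : ℝ) * (Y.card : ℝ)) := by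
          field_simp
      _ ≤ (m : ℝ)⁻¹ * (Fintype.card V : ℝ) := by
          apply mul_le_mul_of_nonneg_left h1 (by positivity)
      _ ≤ ε * (Fintype.card V : ℝ) :=
          mul_le_mul_of_nonneg_right hinv (Nat.cast_nonneg _)
  · intro w
    have hset : ((↑(Finset.univ : Finset V) : Set V)ᶜ ∪ ↑Y) = (↑Y : Set V) := by simp
    have := hYcomp w
    rwa [hset] at this
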